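/- arXiv:1203.4756 — 3 statements merged into one kernel-verified Lean document; each statement's English description precedes it below -/
import Mathlib

section
/- Let g₁ be a continuous function supported in [-T/2, T/2] with Laplace transform G₁, and let s₀ be a zero of G₁. Then the function g₂(t) = g₁(t) + (s₀ + conj(s₀)) e^{s₀ t} ∫_{-T/2}^{t} g₁(τ) e^{-s₀ τ} dτ (for t ≥ -T/2, and g₂(t)=g₁(t)=0 for t < -T/2) also vanishes outside [-T/2, T/2]. -/
/-- Passing a function supported in `[-T/2, T/2]` through the all-pass filter
with impulse response `δ(t) + (s₀ + conj s₀) e^{s₀ t} U(t)`, where `s₀` is a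
zero of its Laplace transform, preserves the support `[-T/2, T/2]`. -/
theorem allpass_preserves_support (T : ℝ) (g₁ g₂ : ℝ → ℂ) (s₀ : ℂ)
    (hcont : Continuous g₁)
    (hsupp : ∀ t : ℝ, |t| > T / 2 → g₁ t = 0)
    (hzero : (∫ t : ℝ, g₁ t * Complex.exp (-(s₀ * t))) = 0)
    (hg₂ : ∀ t : ℝ, -T / 2 ≤ t →
      g₂ t = g₁ t + (s₀ + (starRingEnd ℂ) s₀) * Complex.exp (s₀ * t) *
        ∫ τ in (-T / 2)..t, g₁ τ * Complex.exp (-(s₀ * τ)))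
    (hg₂' : ∀ t : ℝ, t < -T / 2 → g₂ t = g₁ t) :
    ∀ t : ℝ, |t| > T / 2 → g₂ t = 0 := by
  intro t ht
  rcases lt_or_ge t (-T / 2) with h | h
  · rw [hg₂' t h]; exact hsupp t ht
  · have ht' : T / 2 < t := by
      by_contra hc
      push_neg at hc
      have : |t| ≤ T / 2 := abs_le.mpr ⟨by linarith, hc⟩
      linarith
    have key : (∫ τ in (-T / 2)..t, g₁ τ * Complex.exp (-(s₀ * τ)))
        = ∫ τ : ℝ, g₁ τ * Complex.exp (-(s₀ * τ)) := by
      rw [intervalIntegral.integral_of_le h, ← MeasureTheory.integral_Icc_eq_integral_Ioc]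
      apply MeasureTheory.setIntegral_eq_integral_of_forall_compl_eq_zero
      intro x hx
      have : g₁ x = 0 := by
        apply hsupp
        simp only [Set.mem_Icc, not_and_or, not_le] at hx
        rcases hx with hx | hx
        · exact lt_of_lt_of_le (by linarith) (neg_le_abs x)
        · exact lt_of_lt_of_le (by linarith) (le_abs_self x)
      simp [this]
    rw [hg₂ t h, key, hzero, hsupp t ht]
    simp
end

section
/- Let E(s) = (1/2)‖|Fs| - r‖² where F is the unitary DFT. At any point s where Fs has no zero coordinates, the gradient ∇E(s) = s - F⁻¹(r ∘ Fs/|Fs|) is an eigenvector of the (real) Hessian ∇²E(s) with eigenvalue 1; equivalently (∇²E)(∇E) = ∇E. -/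
open Matrix Complex

/-- For `E(s) = (1/2)‖|Fs| - r‖²` with `F` the unitary DFT, at any point where
`Fs` has no zero coordinate, the gradient `∇E(s) = s - F⁻¹(r ∘ Fs/|Fs|)` is an
eigenvector of the Hessian with eigenvalue `1`: `(∇²E)(∇E) = ∇E`. -/
theorem gradient_is_hessian_eigenvector (n : ℕ) (hn : 0 < n)
    (F : Matrix (Fin n) (Fin n) ℂ)
    (hF : ∀ j k : Fin n, F j k = (1 / Real.sqrt n : ℝ) *
      Complex.exp (-(2 * Real.pi * Complex.I * (j : ℕ) * (k : ℕ)) / n))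
    (hunit : F.conjTranspose * F = 1)
    (r : Fin n → ℝ) (hr : ∀ i, 0 ≤ r i)
    (s z : Fin n → ℂ) (hz : z = F.mulVec s) (hznz : ∀ i, z i ≠ 0)
    (g : Fin n → ℂ)
    (hg : g = s - F.conjTranspose.mulVec
      (fun i => (r i : ℂ) * z i / (‖z i‖ : ℂ)))
    (hess : (Fin n → ℂ) → (Fin n → ℂ))
    (hhess : ∀ a : Fin n → ℂ, hess a = F.conjTranspose.mulVec (fun i =>
      (1 - (r i : ℂ) / (2 * (‖z i‖ : ℂ))) * (F.mulVec a) i +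
      ((r i : ℂ) * (z i) ^ 2 / (2 * (‖z i‖ : ℂ) ^ 3)) *
        (starRingEnd ℂ) ((F.mulVec a) i))) :
    hess g = g := by
  have hFF : F * F.conjTranspose = 1 := mul_eq_one_comm.mp hunit
  have hFg : F.mulVec g = fun i => z i - (r i : ℂ) * z i / (‖z i‖ : ℂ) := by
    rw [hg, Matrix.mulVec_sub, Matrix.mulVec_mulVec, hFF, Matrix.one_mulVec, ← hz]
    rfl
  have key : (fun i =>
      (1 - (r i : ℂ) / (2 * (‖z i‖ : ℂ))) * (F.mulVec g) i +
      ((r i : ℂ) * (z i) ^ 2 / (2 * (‖z i‖ : ℂ) ^ 3)) *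
        (starRingEnd ℂ) ((F.mulVec g) i)) = F.mulVec g := by
    funext i
    rw [hFg]
    simp only
    have ha0 : ((‖z i‖ : ℝ) : ℂ) ≠ 0 := by
      simp only [ne_eq, Complex.ofReal_eq_zero, norm_eq_zero]
      exact hznz i
    have hzc : (starRingEnd ℂ) (z i) * z i = ((‖z i‖ : ℝ) : ℂ) ^ 2 := by
      rw [mul_comm, Complex.mul_conj]
      norm_cast
      exact (Complex.sq_norm _).symm
    have hconj : (starRingEnd ℂ) (z i - (r i : ℂ) * z i / ((‖z i‖ : ℝ) : ℂ)) =
        ((‖z i‖ : ℝ) : ℂ) ^ 2 / z i -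
          (r i : ℂ) * (((‖z i‖ : ℝ) : ℂ) ^ 2 / z i) / ((‖z i‖ : ℝ) : ℂ) := by
      have h1 : (starRingEnd ℂ) (z i) = ((‖z i‖ : ℝ) : ℂ) ^ 2 / z i := by
        rw [eq_div_iff (hznz i)]; exact hzc
      rw [map_sub, map_div₀, _root_.map_mul, Complex.conj_ofReal, h1, Complex.conj_ofReal]
    rw [hconj]
    generalize ((‖z i‖ : ℝ) : ℂ) = a at ha0 ⊢
    field_simp [hznz i]
    have h1 : a ^ 6 * a⁻¹ ^ 6 = 1 := by
      rw [← mul_pow, mul_inv_cancel₀ ha0, one_pow]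
    have h2 : z i ^ 3 * (z i)⁻¹ ^ 2 = z i := by
      field_simp [hznz i]
    ring
  rw [hhess, key, Matrix.mulVec_mulVec, hunit, Matrix.one_mulVec]
end

section
/- Let C = diag(t̂) F² where t̂ = Ft for a real vector t and F² acts as index reversal modulo n. For each index pair (k, l) exchanged by F² (t̂_l = conj(t̂_k)), the vectors e_k + (|t̂_k|/t̂_k) e_l and e_k - (|t̂_k|/t̂_k) e_l are eigenvectors of C with eigenvalues |t̂_k| and -|t̂_k| respectively (assuming t̂_k ≠ 0); and for each index m fixed by F², e_m is an eigenvector with eigenvalue t̂_m. -/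
open Matrix

private lemma exp_conj_aux (n : ℕ) [NeZero n] (k j : Fin n)
    (m : ℕ) (hm : m + (k:ℕ) = n) :
    Complex.exp (-(2 * Real.pi * Complex.I * (m : ℕ) * (j : ℕ)) / n)
      = (starRingEnd ℂ) (Complex.exp (-(2 * Real.pi * Complex.I * (k : ℕ) * (j : ℕ)) / n)) := by
  rw [← Complex.exp_conj]
  have hn : (n:ℂ) ≠ 0 := by exact_mod_cast (NeZero.ne n)
  have hmk : (m:ℂ) + (k:ℕ) = n := by exact_mod_cast congrArg (Nat.cast : ℕ → ℂ) hm
  have hc : ((starRingEnd ℂ)) (-(2 * Real.pi * Complex.I * (k : ℕ) * (j : ℕ)) / n)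
      = (2 * Real.pi * Complex.I * (k : ℕ) * (j : ℕ)) / n := by
    simp [map_div₀, Complex.conj_I, map_ofNat]
  rw [hc, Complex.exp_eq_exp_iff_exists_int]
  refine ⟨-(j:ℕ), ?_⟩
  push_cast
  field_simp
  linear_combination (-(((j:ℕ)):ℂ)) * hmk

/-- Eigenvectors and eigenvalues of `C = diag(t̂) F²` where `t̂ = Ft` for real
`t` and `F²` acts by index reversal: for an exchanged index pair `(k, l)` with
`t̂ₖ ≠ 0`, the vectors `eₖ ± (|t̂ₖ|/t̂ₖ) eₗ` are eigenvectors with eigenvalues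
`±|t̂ₖ|`, and for an index `m` fixed by the reversal, `eₘ` is an eigenvector
with eigenvalue `t̂ₘ`. -/
theorem diag_reversal_eigenvectors (n : ℕ) [NeZero n]
    (F : Matrix (Fin n) (Fin n) ℂ)
    (hF : ∀ j k : Fin n, F j k = (1 / Real.sqrt n : ℝ) *
      Complex.exp (-(2 * Real.pi * Complex.I * (j : ℕ) * (k : ℕ)) / n))
    (t : Fin n → ℝ) (that : Fin n → ℂ)
    (hthat : that = F.mulVec (fun i => (t i : ℂ)))
    (C : (Fin n → ℂ) → (Fin n → ℂ))
    (hC : ∀ (v : Fin n → ℂ) (j : Fin n), C v j = that j * v (-j))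
    (k l : Fin n) (hl : l = -k) (hkl : k ≠ l) (hne : that k ≠ 0)
    (a : ℂ) (ha : a = (‖that k‖ : ℂ) / that k) :
    C ((Pi.single k 1 : Fin n → ℂ) + a • (Pi.single l 1 : Fin n → ℂ)) =
      ((‖that k‖ : ℂ)) • ((Pi.single k 1 : Fin n → ℂ) + a • (Pi.single l 1 : Fin n → ℂ)) ∧
    C ((Pi.single k 1 : Fin n → ℂ) - a • (Pi.single l 1 : Fin n → ℂ)) =
      (-(‖that k‖ : ℂ)) • ((Pi.single k 1 : Fin n → ℂ) - a • (Pi.single l 1 : Fin n → ℂ)) ∧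
    (∀ m : Fin n, -m = m → C ((Pi.single m 1 : Fin n → ℂ)) = that m • (Pi.single m 1 : Fin n → ℂ)) := by
  have hk0 : (k : ℕ) ≠ 0 := by
    intro h
    apply hkl
    have hk : k = 0 := by ext; simpa using h
    rw [hl, hk]; simp
  have hlval : ((l : Fin n) : ℕ) + (k : ℕ) = n := by
    have h1 : ((l : Fin n) : ℕ) = (n - (k : ℕ)) % n := by rw [hl, Fin.neg_def]
    have := k.isLt
    rw [h1, Nat.mod_eq_of_lt (by omega)]
    omega
  have hconj : that l = (starRingEnd ℂ) (that k) := by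
    rw [hthat]
    simp only [Matrix.mulVec, dotProduct, map_sum]
    refine Finset.sum_congr rfl fun j _ => ?_
    rw [hF, hF, _root_.map_mul, _root_.map_mul, Complex.conj_ofReal, Complex.conj_ofReal,
      exp_conj_aux n k j _ hlval]
  set θ := that k with hθ
  have habs : a * θ = (‖θ‖ : ℂ) := by rw [ha]; field_simp
  have h2 : that l = (‖θ‖ : ℂ) * a := by
    rw [hconj, ha, mul_div_assoc', eq_div_iff hne, mul_comm ((starRingEnd ℂ) θ) θ,
      Complex.mul_conj', sq]
  have hnk : -k = l := hl.symm
  have hnl : -l = k := by rw [hl, neg_neg]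
  have hlk : l ≠ k := Ne.symm hkl
  refine ⟨?_, ?_, ?_⟩
  · funext j
    rw [hC]
    by_cases hjk : j = k
    · subst hjk
      simp [hnk, Pi.single_apply, hkl, hlk, mul_comm θ a, habs]
      exact (mul_comm _ _).trans habs
    · by_cases hjl : j = l
      · subst hjl
        simp [hnl, Pi.single_apply, hkl, hlk, h2]
      · have h1 : -j ≠ k := fun h => hjl (by rw [← hnk, ← h, neg_neg])
        have h3 : -j ≠ l := fun h => hjk (by rw [← hnl, ← h, neg_neg])
        simp [Pi.single_apply, hjk, hjl, h1, h3]
  · funext j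
    rw [hC]
    by_cases hjk : j = k
    · subst hjk
      simp [hnk, Pi.single_apply, hkl, hlk, mul_comm θ a, habs]
      exact (mul_comm _ _).trans habs
    · by_cases hjl : j = l
      · subst hjl
        simp [hnl, Pi.single_apply, hkl, hlk, h2]
      · have h1 : -j ≠ k := fun h => hjl (by rw [← hnk, ← h, neg_neg])
        have h3 : -j ≠ l := fun h => hjk (by rw [← hnl, ← h, neg_neg])
        simp [Pi.single_apply, hjk, hjl, h1, h3]
  · intro m hm
    funext j
    rw [hC]
    by_cases hjm : j = m
    · subst hjm; rw [hm]; simp [Pi.single_apply]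
    · have : -j ≠ m := fun h => hjm (by rw [← hm, ← h, neg_neg])
      simp [Pi.single_apply, hjm, this]
end
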